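/- Let g(x) = min{2x, 2-2x} on [0,1] and g_m its m-fold composition. Then the partial sum f_n(x) = x - ∑_{m=1}^n g_m(x)/4^m satisfies |f_n(x) - x²| ≤ 4^{-(n+1)} for all x ∈ [0,1]. -/

import Mathlib

/-- The tent (hat) function `g(x) = min (2x) (2 - 2x)`. -/
noncomputable def tent : ℝ → ℝ := fun x => min (2 * x) (2 - 2 * x)

lemma tent_mem {x : ℝ} (hx : x ∈ Set.Icc (0 : ℝ) 1) : tent x ∈ Set.Icc (0 : ℝ) 1 := by
  obtain ⟨h0, h1⟩ := hx
  unfold tent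
  constructor
  · rcases le_total x (1/2) with h | h
    · rw [min_eq_left (by linarith)]; linarith
    · rw [min_eq_right (by linarith)]; linarith
  · rcases le_total x (1/2) with h | h
    · rw [min_eq_left (by linarith)]; linarith
    · rw [min_eq_right (by linarith)]; linarith

lemma tent_iter_mem {x : ℝ} (hx : x ∈ Set.Icc (0 : ℝ) 1) (n : ℕ) :
    tent^[n] x ∈ Set.Icc (0 : ℝ) 1 := by
  induction n with
  | zero => simpa using hx
  | succ n ih => rw [Function.iterate_succ_apply']; exact tent_mem ih

lemma key_identity {y : ℝ} (hy : y ∈ Set.Icc (0 : ℝ) 1) :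
    y - y ^ 2 = tent y / 4 + (tent y - (tent y) ^ 2) / 4 := by
  obtain ⟨h0, h1⟩ := hy
  unfold tent
  rcases le_total y (1/2) with h | h
  · rw [min_eq_left (by linarith)]; ring
  · rw [min_eq_right (by linarith)]; ring

lemma err_eq (n : ℕ) (x : ℝ) (hx : x ∈ Set.Icc (0 : ℝ) 1) :
    (x - ∑ m ∈ Finset.Icc 1 n, tent^[m] x / 4 ^ m) - x ^ 2
      = (tent^[n] x - (tent^[n] x) ^ 2) / 4 ^ n := by
  induction n with
  | zero => simp
  | succ n ih =>
    rw [Finset.sum_Icc_succ_top (by omega)]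
    have hk := key_identity (tent_iter_mem hx n)
    rw [Function.iterate_succ_apply']
    have h4 : (4 : ℝ) ^ n ≠ 0 := by positivity
    have h4' : (4 : ℝ) ^ (n + 1) ≠ 0 := by positivity
    have : (x - ∑ m ∈ Finset.Icc 1 n, tent^[m] x / 4 ^ m) - x ^ 2
        = (tent^[n] x - (tent^[n] x) ^ 2) / 4 ^ n := ih
    set y := tent^[n] x
    set S := ∑ m ∈ Finset.Icc 1 n, tent^[m] x / 4 ^ m
    rw [pow_succ]
    field_simp at ih hk ⊢
    ring_nf at ih hk ⊢
    linarith [ih, hk]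

lemma quad_bound {y : ℝ} (hy : y ∈ Set.Icc (0 : ℝ) 1) : |y - y ^ 2| ≤ 1 / 4 := by
  obtain ⟨h0, h1⟩ := hy
  rw [abs_le]
  constructor <;> nlinarith [sq_nonneg (y - 1/2)]

/-- The partial sum `f_n(x) = x - ∑_{m=1}^n g_m(x)/4^m` (with `g_m` the `m`-fold
composition of the tent map) approximates `x²` on `[0,1]` with error at most `4^{-(n+1)}`. -/
theorem stmt_1 (n : ℕ) (x : ℝ) (hx : x ∈ Set.Icc (0 : ℝ) 1) :
    |(x - ∑ m ∈ Finset.Icc 1 n, tent^[m] x / 4 ^ m) - x ^ 2| ≤ ((4 : ℝ) ^ (n + 1))⁻¹ := by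
  rw [err_eq n x hx, abs_div, abs_of_pos (show (0:ℝ) < 4 ^ n by positivity)]
  have hb := quad_bound (tent_iter_mem hx n)
  rw [div_le_iff₀ (by positivity)]
  have : ((4 : ℝ) ^ (n + 1))⁻¹ * 4 ^ n = 1 / 4 := by
    rw [pow_succ]; field_simp
  rw [this]; exact hb
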